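/- The conjunction and disjunction of conditional random quantities satisfy the numerical De Morgan laws: (A|H) ∨ (B|K) = 1 − (¬A|H) ∧ (¬B|K) and (A|H) ∧ (B|K) = 1 − (¬A|H) ∨ (¬B|K), as equalities of random quantities. -/
import Mathlib


/-- Indicator (in `ℝ`) of an event. -/
noncomputable def ind {Ω : Type*} (A : Set Ω) : Ω → ℝ := A.indicator 1

/-- The indicator of the conditional event `A|H` with `x = P(A|H)`:
value `1` on `AH`, `0` on `¬AH`, `x` on `¬H`. -/
noncomputable def condRQ {Ω : Type*} (A H : Set Ω) (x : ℝ) : Ω → ℝ :=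
  fun ω => ind (A ∩ H) ω + x * ind Hᶜ ω

/-- The conjunction `(A|H) ∧ (B|K)` as a random quantity: value `1` on `AHBK`,
`0` on `¬AH ∨ ¬BK`, `x` on `¬HBK`, `y` on `AH¬K`, `z` on `¬H¬K`, where
`x = P(A|H)`, `y = P(B|K)`, `z = ℙ[(A|H) ∧ (B|K)]`. -/
noncomputable def conjRQ {Ω : Type*} (A H B K : Set Ω) (x y z : ℝ) : Ω → ℝ :=
  fun ω => ind (A ∩ H ∩ (B ∩ K)) ω + x * ind (Hᶜ ∩ B ∩ K) ω
    + y * ind (A ∩ H ∩ Kᶜ) ω + z * ind (Hᶜ ∩ Kᶜ) ω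

/-- The disjunction `(A|H) ∨ (B|K)` as a random quantity: value `1` on
`AH ∨ BK`, `0` on `¬AH¬BK`, `x` on `¬H¬BK`, `y` on `¬AH¬K`, `w` on `¬H¬K`. -/
noncomputable def disjRQ {Ω : Type*} (A H B K : Set Ω) (x y w : ℝ) : Ω → ℝ :=
  fun ω => ind (A ∩ H ∪ B ∩ K) ω + x * ind (Hᶜ ∩ Bᶜ ∩ K) ω
    + y * ind (Aᶜ ∩ H ∩ Kᶜ) ω + w * ind (Hᶜ ∩ Kᶜ) ω

/-- Numerical De Morgan laws for conjunction and disjunction of conditional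
random quantities:  `(A|H) ∨ (B|K) = 1 − (¬A|H) ∧ (¬B|K)` and
`(A|H) ∧ (B|K) = 1 − (¬A|H) ∨ (¬B|K)`, as equalities of random quantities,
with `x = P(A|H)`, `y = P(B|K)`, `z' = ℙ[(¬A|H) ∧ (¬B|K)]`,
`w' = ℙ[(¬A|H) ∨ (¬B|K)]`, and previsions (by coherence) satisfying
`w = 1 − z'` and `z = 1 − w'`. -/
theorem deMorgan_condRQ {Ω : Type*} (A H B K : Set Ω)
    (x y z w z' w' : ℝ) (hw : w = 1 - z') (hz : z = 1 - w') :
    (∀ ω : Ω, disjRQ A H B K x y w ω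
        = 1 - conjRQ Aᶜ H Bᶜ K (1 - x) (1 - y) z' ω) ∧
    (∀ ω : Ω, conjRQ A H B K x y z ω
        = 1 - disjRQ Aᶜ H Bᶜ K (1 - x) (1 - y) w' ω) := by
  subst hw hz
  constructor <;> intro ω <;>
    simp only [disjRQ, conjRQ, ind, Set.indicator_apply, Set.mem_inter_iff,
      Set.mem_union, Set.mem_compl_iff, Pi.one_apply] <;>
    by_cases hA : ω ∈ A <;> by_cases hH : ω ∈ H <;>
    by_cases hB : ω ∈ B <;> by_cases hK : ω ∈ K <;>
    simp [hA, hH, hB, hK] <;> ring
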